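/- Let Q̄ be an imprecise probability tree, let E be a global upper expectation satisfying axioms P1–P5 together with P3= and P6, and let E' be any global upper expectation satisfying P1–P5. Then E(f|s) ≥ E'(f|s) for every f ∈ V̄_{b,lim} and every situation s ∈ 𝒳*. -/

import Mathlib

open Filter MeasureTheory
open scoped Classical ENNReal NNReal

namespace UEP

variable {X : Type*}

/-- The string of the first `n` states of a path `ω`. -/
def pref (ω : ℕ → X) (n : ℕ) : List X := List.ofFn (fun i : Fin n => ω i)

/-- The cylinder event of a situation `s`. -/
def cyl (s : List X) : Set (ℕ → X) := {ω : ℕ → X | pref ω s.length = s}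

/-- `f` depends only on the first `n` states. -/
def NMeas (n : ℕ) (f : (ℕ → X) → EReal) : Prop :=
  ∀ ω₁ ω₂ : ℕ → X, pref ω₁ n = pref ω₂ n → f ω₁ = f ω₂

/-- `f` is bounded below (by a real constant). -/
def IsBddBelow (f : (ℕ → X) → EReal) : Prop := ∃ c : ℝ, ∀ ω, (c : EReal) ≤ f ω

/-- `f` is bounded above (by a real constant). -/
def IsBddAbove (f : (ℕ → X) → EReal) : Prop := ∃ c : ℝ, ∀ ω, f ω ≤ (c : EReal)

/-- `f` is real-valued and bounded. -/
def IsGambleVal (f : (ℕ → X) → EReal) : Prop :=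
  ∃ a b : ℝ, ∀ ω, (a : EReal) ≤ f ω ∧ f ω ≤ (b : EReal)

/-- `f` is an `n`-measurable gamble. -/
def IsNGamble (n : ℕ) (f : (ℕ → X) → EReal) : Prop := NMeas n f ∧ IsGambleVal f

/-- `f` is a finitary gamble. -/
def IsFinitaryGamble (f : (ℕ → X) → EReal) : Prop := (∃ n, NMeas n f) ∧ IsGambleVal f

/-- `f` is finitary. -/
def IsFinitary (f : (ℕ → X) → EReal) : Prop := ∃ n, NMeas n f

/-- pointwise convergence of a sequence of global variables. -/
def PtwLim (fs : ℕ → (ℕ → X) → EReal) (f : (ℕ → X) → EReal) : Prop :=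
  ∀ ω, Tendsto (fun n => fs n ω) atTop (nhds (f ω))

/-- the sequence is uniformly bounded below. -/
def UnifBddBelow (fs : ℕ → (ℕ → X) → EReal) : Prop :=
  ∃ c : ℝ, ∀ n ω, (c : EReal) ≤ fs n ω

/-- `f` belongs to `V̄_{b,lim}`: bounded below and a pointwise limit of finitary gambles. -/
def Vblim (f : (ℕ → X) → EReal) : Prop :=
  IsBddBelow f ∧ ∃ fs : ℕ → (ℕ → X) → EReal,
    (∀ n, IsFinitaryGamble (fs n)) ∧ PtwLim fs f

/-- A coherent upper expectation on the finite state space `X`. -/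
def IsCoherent [Fintype X] (Q : (X → ℝ) → ℝ) : Prop :=
  (∀ f : X → ℝ, Q f ≤ ⨆ x, f x) ∧
  (∀ f g : X → ℝ, Q (fun x => f x + g x) ≤ Q f + Q g) ∧
  (∀ l : ℝ, 0 ≤ l → ∀ f : X → ℝ, Q (fun x => l * f x) = l * Q f)

/-- Axiom P1: compatibility with the local models. -/
def P1 (Q : List X → (X → ℝ) → ℝ) (E : ((ℕ → X) → EReal) → List X → EReal) : Prop :=
  ∀ (s : List X) (f : X → ℝ),
    E (fun ω => (f (ω s.length) : EReal)) s = ((Q s f : ℝ) : EReal)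

/-- Axiom P2. -/
def P2 (E : ((ℕ → X) → EReal) → List X → EReal) : Prop :=
  ∀ f : (ℕ → X) → EReal, IsFinitaryGamble f → ∀ s : List X,
    E f s = E (fun ω => if ω ∈ cyl s then f ω else 0) s

/-- Axiom P3 (inequality form). -/
def P3le (E : ((ℕ → X) → EReal) → List X → EReal) : Prop :=
  ∀ f : (ℕ → X) → EReal, IsFinitaryGamble f → ∀ (n : ℕ) (ω : ℕ → X),
    E f (pref ω n) ≤ E (fun ω' => E f (pref ω' (n + 1))) (pref ω n)

/-- Axiom P3 with equality: the law of iterated upper expectations. -/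
def P3eq (E : ((ℕ → X) → EReal) → List X → EReal) : Prop :=
  ∀ f : (ℕ → X) → EReal, IsFinitaryGamble f → ∀ (n : ℕ) (ω : ℕ → X),
    E f (pref ω n) = E (fun ω' => E f (pref ω' (n + 1))) (pref ω n)

/-- Axiom P4: monotonicity. -/
def P4 (E : ((ℕ → X) → EReal) → List X → EReal) : Prop :=
  ∀ f g : (ℕ → X) → EReal, (∀ ω, f ω ≤ g ω) → ∀ s : List X, E f s ≤ E g s

/-- Axiom P5. -/
def P5 (E : ((ℕ → X) → EReal) → List X → EReal) : Prop :=
  ∀ (s : List X) (f : (ℕ → X) → EReal) (fs : ℕ → (ℕ → X) → EReal),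
    (∀ n, IsFinitaryGamble (fs n)) → UnifBddBelow fs → PtwLim fs f →
    E f s ≤ limsup (fun n => E (fs n) s) atTop

/-- Axiom P6. -/
def P6 (E : ((ℕ → X) → EReal) → List X → EReal) : Prop :=
  ∀ f : (ℕ → X) → EReal, Vblim f → ∀ s : List X,
    ∃ fs : ℕ → (ℕ → X) → EReal,
      (∀ n, IsNGamble n (fs n)) ∧ UnifBddBelow fs ∧ PtwLim fs f ∧
      limsup (fun n => E (fs n) s) atTop ≤ E f s

/-- Axiom P7. -/
def P7 (E : ((ℕ → X) → EReal) → List X → EReal) : Prop :=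
  ∀ (f : (ℕ → X) → EReal) (s : List X),
    E f s = sInf {y : EReal | ∃ g : (ℕ → X) → EReal,
      Vblim g ∧ (∀ ω, f ω ≤ g ω) ∧ y = E g s}

/-- bundled axioms P1–P5. -/
def P15 (Q : List X → (X → ℝ) → ℝ) (E : ((ℕ → X) → EReal) → List X → EReal) : Prop :=
  P1 Q E ∧ P2 E ∧ P3le E ∧ P4 E ∧ P5 E

/-- `Qe` extends `Q` from gambles to extended-real variables. -/
def ExtendsLocal [Fintype X] (Q : (X → ℝ) → ℝ) (Qe : (X → EReal) → EReal) : Prop :=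
  ∀ f : X → ℝ, Qe (fun x => (f x : EReal)) = ((Q f : ℝ) : EReal)

/-- continuity with respect to upper cuts. -/
def UpperCutCont (Qe : (X → EReal) → EReal) : Prop :=
  ∀ f : X → EReal, (∃ c : ℝ, ∀ x, (c : EReal) ≤ f x) →
    Tendsto (fun c : ℝ => Qe (fun x => min (f x) (c : EReal))) atTop (nhds (Qe f))

/-- continuity with respect to lower cuts. -/
def LowerCutCont (Qe : (X → EReal) → EReal) : Prop :=
  ∀ f : X → EReal,
    Tendsto (fun c : ℝ => Qe (fun x => max (f x) (c : EReal))) atBot (nhds (Qe f))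

/-- `Qe` is the extension of the imprecise probability tree `Q` satisfying
continuity with respect to upper and lower cuts. -/
def LocalExtension [Fintype X] (Q : List X → (X → ℝ) → ℝ)
    (Qe : List X → (X → EReal) → EReal) : Prop :=
  ∀ s : List X, ExtendsLocal (Q s) (Qe s) ∧ UpperCutCont (Qe s) ∧ LowerCutCont (Qe s)

/-- supermartingale with respect to the extended local models `Qe`. -/
def IsSupermart (Qe : List X → (X → EReal) → EReal) (M : List X → EReal) : Prop :=
  ∀ s : List X, Qe s (fun x => M (s ++ [x])) ≤ M s

/-- a bounded-below process. -/
def MBddBelow (M : List X → EReal) : Prop := ∃ c : ℝ, ∀ s : List X, (c : EReal) ≤ M s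

/-- the game-theoretic upper expectation (Shafer–Vovk). -/
noncomputable def EV (Qe : List X → (X → EReal) → EReal)
    (f : (ℕ → X) → EReal) (s : List X) : EReal :=
  sInf {y : EReal | ∃ M : List X → EReal, MBddBelow M ∧ IsSupermart Qe M ∧
    (∀ ω ∈ cyl s, f ω ≤ liminf (fun n => M (pref ω n)) atTop) ∧ y = M s}

/-- a canonical path passing through the situation `s`. -/
noncomputable def extPath [Nonempty X] (s : List X) : ℕ → X :=
  fun i => if h : i < s.length then s.get ⟨i, h⟩ else Classical.arbitrary X

/-- extended-real addition with the convention `(+∞) + (−∞) = (−∞) + (+∞) = +∞`. -/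
noncomputable def eadd (a b : EReal) : EReal := if a = ⊤ ∨ b = ⊤ then ⊤ else a + b

/-- extended-real finite sums with the conventions `0·(±∞) = 0` and
`(+∞) + (−∞) = +∞`. -/
noncomputable def esum {α : Type*} (s : Finset α) (f : α → EReal) : EReal :=
  if ∃ x ∈ s, f x = ⊤ then ⊤ else ∑ x ∈ s, f x

/-- the σ-algebra `ℱ` on paths generated by all cylinder events. -/
def cylSA (X : Type*) : MeasurableSpace (ℕ → X) :=
  MeasurableSpace.generateFrom {A : Set (ℕ → X) | ∃ s : List X, A = cyl s}

/-- a precise probability tree: a probability mass function in every situation. -/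
def IsTree [Fintype X] (p : List X → X → ℝ) : Prop :=
  ∀ s : List X, (∀ x, 0 ≤ p s x) ∧ ∑ x, p s x = 1

/-- the `i`-th entry (0-based) of a list, i.e. the `(i+1)`-th state. -/
noncomputable def nthL [Nonempty X] (z : List X) (i : ℕ) : X :=
  z.getD i (Classical.arbitrary X)

/-- `P` is the family of conditional probability measures on `ℱ` determined by
the precise probability tree `p` via the product formula on cylinder events. -/
def CylProp [Fintype X] [Nonempty X] (p : List X → X → ℝ)
    (P : List X → @Measure (ℕ → X) (cylSA X)) : Prop :=
  ∀ s z : List X,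
    P s (cyl z) =
      if s.length < z.length ∧ z.take s.length = s then
        ∏ i ∈ Finset.Ico s.length z.length, ENNReal.ofReal (p (z.take i) (nthL z i))
      else if z.length ≤ s.length ∧ s.take z.length = z then 1 else 0

/-- the nonnegative part of an extended real, as an `ℝ≥0∞`. -/
noncomputable def toENN (a : EReal) : ℝ≥0∞ := if a = ⊤ then ⊤ else ENNReal.ofReal a.toReal

/-- `∫ f⁺ dP`. -/
noncomputable def lpos (P : @Measure (ℕ → X) (cylSA X)) (f : (ℕ → X) → EReal) : ℝ≥0∞ :=
  @MeasureTheory.lintegral _ (cylSA X) P (fun ω => toENN (f ω))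

/-- `∫ f⁻ dP`. -/
noncomputable def lneg (P : @Measure (ℕ → X) (cylSA X)) (f : (ℕ → X) → EReal) : ℝ≥0∞ :=
  @MeasureTheory.lintegral _ (cylSA X) P (fun ω => toENN (-(f ω)))

/-- the Lebesgue integral `∫ f dP = ∫ f⁺ dP − ∫ f⁻ dP`. -/
noncomputable def emeas (P : @Measure (ℕ → X) (cylSA X)) (f : (ℕ → X) → EReal) : EReal :=
  (lpos P f : EReal) - (lneg P f : EReal)

/-- `ℱ`-measurability of a global variable. -/
def FMeasurable (f : (ℕ → X) → EReal) : Prop := @Measurable _ _ (cylSA X) _ f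

/-- the Lebesgue integral `∫ f dP` exists. -/
def EMeasExists (P : @Measure (ℕ → X) (cylSA X)) (f : (ℕ → X) → EReal) : Prop :=
  FMeasurable f ∧ min (lpos P f) (lneg P f) < ⊤

/-- the upper integral `Ē¹`. -/
noncomputable def upInt1 (P : @Measure (ℕ → X) (cylSA X)) (f : (ℕ → X) → EReal) : EReal :=
  sInf {y : EReal | ∃ g : (ℕ → X) → EReal,
    FMeasurable g ∧ IsBddBelow g ∧ (∀ ω, f ω ≤ g ω) ∧ y = emeas P g}

/-- the upper integral `Ē²`. -/
noncomputable def upInt2 (P : @Measure (ℕ → X) (cylSA X)) (f : (ℕ → X) → EReal) : EReal :=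
  sInf {y : EReal | ∃ g : (ℕ → X) → EReal,
    EMeasExists P g ∧ (∀ ω, f ω ≤ g ω) ∧ y = emeas P g}

/-- the game-theoretic upper expectation with respect to a precise probability tree. -/
noncomputable def EVp [Fintype X] (p : List X → X → ℝ)
    (f : (ℕ → X) → EReal) (s : List X) : EReal :=
  sInf {y : EReal | ∃ M : List X → EReal, MBddBelow M ∧
    (∀ t : List X, ∑ x, ((p t x : ℝ) : EReal) * M (t ++ [x]) ≤ M t) ∧
    (∀ ω ∈ cyl s, f ω ≤ liminf (fun n => M (pref ω n)) atTop) ∧ y = M s}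

/-- the credal set of a coherent upper expectation. -/
def credal [Fintype X] (Q : (X → ℝ) → ℝ) : Set (X → ℝ) :=
  {q | (∀ x, 0 ≤ q x) ∧ (∑ x, q x = 1) ∧ ∀ f : X → ℝ, ∑ x, f x * q x ≤ Q f}

/-- a precise probability tree compatible with the imprecise probability tree `Q`. -/
def Compat [Fintype X] (Q : List X → (X → ℝ) → ℝ) (p : List X → X → ℝ) : Prop :=
  ∀ s : List X, p s ∈ credal (Q s)

/-- the global measure-theoretic upper expectation. -/
noncomputable def Emeas [Fintype X] (Q : List X → (X → ℝ) → ℝ)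
    (P : (List X → X → ℝ) → List X → @Measure (ℕ → X) (cylSA X))
    (f : (ℕ → X) → EReal) (s : List X) : EReal :=
  sSup {y : EReal | ∃ p : List X → X → ℝ, Compat Q p ∧ y = upInt1 (P p s) f}



section Aux

lemma pref_eq_iff (ω₁ ω₂ : ℕ → X) (n : ℕ) :
    pref ω₁ n = pref ω₂ n ↔ ∀ i : Fin n, ω₁ i = ω₂ i := by
  unfold pref
  rw [List.ofFn_inj]
  exact funext_iff

lemma pref_mono {ω₁ ω₂ : ℕ → X} {n m : ℕ} (h : pref ω₁ m = pref ω₂ m) (hnm : n ≤ m) :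
    pref ω₁ n = pref ω₂ n := by
  rw [pref_eq_iff] at h ⊢
  exact fun i => h ⟨i, lt_of_lt_of_le i.isLt hnm⟩

lemma length_pref (ω : ℕ → X) (n : ℕ) : (pref ω n).length = n := List.length_ofFn

lemma pref_succ (ω : ℕ → X) (n : ℕ) : pref ω (n + 1) = pref ω n ++ [ω n] := by
  unfold pref
  rw [List.ofFn_succ', List.concat_eq_append]
  simp

lemma pref_extPath [Nonempty X] (t : List X) : pref (extPath t) t.length = t := by
  have h : (fun i : Fin t.length => extPath t i) = t.get := by
    funext i
    simp [extPath, i.isLt]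
  rw [pref, h, List.ofFn_get]

lemma Qconst [Fintype X] [Nonempty X] {Q : (X → ℝ) → ℝ} (hQ : IsCoherent Q) (c : ℝ) :
    Q (fun _ => c) = c := by
  obtain ⟨h1, h2, h3⟩ := hQ
  have hz : Q (fun _ => (0 : ℝ)) = 0 := by
    have := h3 0 le_rfl (fun _ => 0)
    simpa using this
  have hle : Q (fun _ => c) ≤ c := by
    have := h1 (fun _ => c); simpa [ciSup_const] using this
  have hnegle : Q (fun _ => -c) ≤ -c := by
    have := h1 (fun _ => -c); simpa [ciSup_const] using this
  have hadd := h2 (fun _ => c) (fun _ => -c)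
  have hc0 : (fun _ : X => c + -c) = (fun _ => (0 : ℝ)) := by funext x; ring
  rw [hc0, hz] at hadd
  linarith

lemma Econst [Fintype X] [Nonempty X] {Q : List X → (X → ℝ) → ℝ}
    (hQ : ∀ s, IsCoherent (Q s))
    {F : ((ℕ → X) → EReal) → List X → EReal} (hF1 : P1 Q F) (t : List X) (c : ℝ) :
    F (fun _ => (c : EReal)) t = (c : EReal) := by
  have := hF1 t (fun _ => c)
  rw [Qconst (hQ t) c] at this
  exact this

lemma Ebounds [Fintype X] [Nonempty X] {Q : List X → (X → ℝ) → ℝ}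
    (hQ : ∀ s, IsCoherent (Q s))
    {F : ((ℕ → X) → EReal) → List X → EReal} (hF1 : P1 Q F) (hF4 : P4 F)
    {g : (ℕ → X) → EReal} {a b : ℝ} (hab : ∀ ω, (a : EReal) ≤ g ω ∧ g ω ≤ (b : EReal))
    (t : List X) : (a : EReal) ≤ F g t ∧ F g t ≤ (b : EReal) := by
  constructor
  · have := hF4 (fun _ => (a : EReal)) g (fun ω => (hab ω).1) t
    rwa [Econst hQ hF1 t a] at this
  · have := hF4 g (fun _ => (b : EReal)) (fun ω => (hab ω).2) t
    rwa [Econst hQ hF1 t b] at this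

lemma constGamble (c : ℝ) : IsFinitaryGamble (fun _ : ℕ → X => (c : EReal)) :=
  ⟨⟨0, fun _ _ _ => rfl⟩, c, c, fun _ => ⟨le_rfl, le_rfl⟩⟩

lemma eqCase [Fintype X] [Nonempty X] {Q : List X → (X → ℝ) → ℝ}
    (hQ : ∀ s, IsCoherent (Q s))
    {F : ((ℕ → X) → EReal) → List X → EReal} (hF1 : P1 Q F) (hF2 : P2 F)
    {g : (ℕ → X) → EReal} {n : ℕ} (hg : IsNGamble n g) {t : List X}
    (hn : n ≤ t.length) : F g t = g (extPath t) := by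
  obtain ⟨hmeas, a, b, hab⟩ := hg
  have hnetop : g (extPath t) ≠ ⊤ :=
    ne_top_of_le_ne_top (EReal.coe_ne_top b) (hab _).2
  have hnebot : g (extPath t) ≠ ⊥ := by
    intro hbot
    have := (hab (extPath t)).1
    rw [hbot] at this
    exact (EReal.coe_ne_bot a) (le_bot_iff.1 this)
  set c : ℝ := (g (extPath t)).toReal with hcdef
  have hc : g (extPath t) = (c : EReal) := (EReal.coe_toReal hnetop hnebot).symm
  have hcylval : ∀ ω ∈ cyl t, g ω = (c : EReal) := by
    intro ω hω
    rw [← hc]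
    apply hmeas
    have hpe : pref ω t.length = pref (extPath t) t.length := by
      rw [pref_extPath]; exact hω
    exact pref_mono hpe hn
  have hFg := hF2 g ⟨⟨n, hmeas⟩, a, b, hab⟩ t
  have hFc := hF2 (fun _ => (c : EReal)) (constGamble c) t
  have heq : (fun ω => if ω ∈ cyl t then g ω else 0)
      = (fun ω : ℕ → X => if ω ∈ cyl t then (c : EReal) else 0) := by
    funext ω
    by_cases h : ω ∈ cyl t
    · simp [h, hcylval ω h]
    · simp [h]
  rw [hFg, heq, ← hFc, Econst hQ hF1 t c, hc]

lemma compLemma [Fintype X] [Nonempty X] {Q : List X → (X → ℝ) → ℝ}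
    {F : ((ℕ → X) → EReal) → List X → EReal} (hF1 : P1 Q F) (hF2 : P2 F)
    {h : (ℕ → X) → EReal} (hh : IsFinitaryGamble h) {t : List X} {φ : X → ℝ}
    (hcyl : ∀ ω ∈ cyl t, h ω = (φ (ω t.length) : EReal)) :
    F h t = ((Q t φ : ℝ) : EReal) := by
  have hbdd : ∀ x, (⨅ y, φ y) ≤ φ x ∧ φ x ≤ ⨆ y, φ y := fun x =>
    ⟨ciInf_le (Set.Finite.bddBelow (Set.finite_range φ)) x,
     le_ciSup (Set.Finite.bddAbove (Set.finite_range φ)) x⟩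
  have hφg : IsFinitaryGamble (fun ω : ℕ → X => (φ (ω t.length) : EReal)) := by
    refine ⟨⟨t.length + 1, ?_⟩, ⨅ y, φ y, ⨆ y, φ y, fun ω => ?_⟩
    · intro ω₁ ω₂ hp
      have := (pref_eq_iff ω₁ ω₂ (t.length + 1)).1 hp ⟨t.length, Nat.lt_succ_self _⟩
      simp only [this]
    · exact ⟨EReal.coe_le_coe_iff.2 (hbdd _).1, EReal.coe_le_coe_iff.2 (hbdd _).2⟩
  have h1 := hF2 h hh t
  have h2 := hF2 _ hφg t
  have heq : (fun ω => if ω ∈ cyl t then h ω else 0)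
      = (fun ω : ℕ → X => if ω ∈ cyl t then (φ (ω t.length) : EReal) else 0) := by
    funext ω
    by_cases hm : ω ∈ cyl t
    · simp [hm, hcyl ω hm]
    · simp [hm]
  rw [h1, heq, ← h2, hF1 t φ]

lemma finLemma [Fintype X] [Nonempty X] {Q : List X → (X → ℝ) → ℝ}
    (hQ : ∀ s, IsCoherent (Q s))
    {E E' : ((ℕ → X) → EReal) → List X → EReal}
    (hE : P15 Q E) (hEiter : P3eq E) (hE' : P15 Q E') :
    ∀ (k n : ℕ) (g : (ℕ → X) → EReal), IsNGamble n g → ∀ t : List X,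
      n ≤ t.length + k → E' g t ≤ E g t := by
  intro k
  induction k with
  | zero =>
    intro n g hg t hn
    rw [eqCase hQ hE.1 hE.2.1 hg (by simpa using hn),
        eqCase hQ hE'.1 hE'.2.1 hg (by simpa using hn)]
  | succ k ih =>
    intro n g hg t hn
    set m := t.length with hm
    have hgfin : IsFinitaryGamble g := ⟨⟨n, hg.1⟩, hg.2⟩
    obtain ⟨a, b, hab⟩ := hg.2
    have hEb : ∀ t' : List X, (a : EReal) ≤ E g t' ∧ E g t' ≤ (b : EReal) :=
      Ebounds hQ hE.1 hE.2.2.2.1 hab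
    set φ : X → ℝ := fun x => (E g (t ++ [x])).toReal with hφdef
    have hφ : ∀ x, (φ x : EReal) = E g (t ++ [x]) := by
      intro x
      apply EReal.coe_toReal
      · exact ne_top_of_le_ne_top (EReal.coe_ne_top b) (hEb _).2
      · intro hbot
        have := (hEb (t ++ [x])).1
        rw [hbot] at this
        exact (EReal.coe_ne_bot a) (le_bot_iff.1 this)
    have step1 : E' g t ≤ E' (fun ω' => E' g (pref ω' (m + 1))) t := by
      have := hE'.2.2.1 g hgfin m (extPath t)
      rwa [hm, pref_extPath] at this
    have hmono : ∀ ω', E' g (pref ω' (m + 1)) ≤ E g (pref ω' (m + 1)) := by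
      intro ω'
      refine ih n g hg _ ?_
      rw [length_pref]
      omega
    have step2 := hE'.2.2.2.1 _ _ hmono t
    have hhcyl : ∀ ω ∈ cyl t, E g (pref ω (m + 1)) = (φ (ω t.length) : EReal) := by
      intro ω hω
      rw [pref_succ, hω, hφ]
    have hhg : IsFinitaryGamble (fun ω' => E g (pref ω' (m + 1))) :=
      ⟨⟨m + 1, fun ω₁ ω₂ hp => by simp only [hp]⟩, a, b, fun ω => hEb _⟩
    have step3 : E' (fun ω' => E g (pref ω' (m + 1))) t
        = E (fun ω' => E g (pref ω' (m + 1))) t := by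
      rw [compLemma hE'.1 hE'.2.1 hhg hhcyl, compLemma hE.1 hE.2.1 hhg hhcyl]
    have step4 : E (fun ω' => E g (pref ω' (m + 1))) t = E g t := by
      have := hEiter g hgfin m (extPath t)
      rw [hm, pref_extPath] at this
      exact this.symm
    exact le_trans step1 (le_trans step2 (le_trans (le_of_eq step3) (le_of_eq step4)))

end Aux

theorem stmt2 {X : Type*} [Fintype X] [Nonempty X]
    (Q : List X → (X → ℝ) → ℝ) (hQ : ∀ s, IsCoherent (Q s))
    (E E' : ((ℕ → X) → EReal) → List X → EReal)
    (hE : P15 Q E) (hEiter : P3eq E) (hE6 : P6 E)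
    (hE' : P15 Q E')
    (f : (ℕ → X) → EReal) (hf : Vblim f) (s : List X) :
    E' f s ≤ E f s := by
  obtain ⟨fs, hfs, hub, hlim, hls⟩ := hE6 f hf s
  have h5 := hE'.2.2.2.2 s f fs (fun n => ⟨⟨n, (hfs n).1⟩, (hfs n).2⟩) hub hlim
  refine le_trans h5 (le_trans ?_ hls)
  exact Filter.limsup_le_limsup (Filter.Eventually.of_forall fun n =>
    finLemma hQ hE hEiter hE' n n (fs n) (hfs n) s (Nat.le_add_left n s.length))

end UEP
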